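/- Proposition 2 (for the convolution-stride slicer): for every p ≥ 1 and all Borel probability measures μ, ν on ℝ^{c×d×d} with finite p-th moments, CSW-s_p(μ,ν) ≤ Max-SW_p(μ,ν) ≤ W_p(μ,ν), where Max-SW_p(μ,ν) = sup_{θ ∈ ℝ^{cd²}, ‖θ‖ ≤ 1} W_p(θ♯μ, θ♯ν) is the max-sliced Wasserstein distance of order p. -/

import Mathlib

open MeasureTheory ENNReal

noncomputable section

/-- The set of couplings (transport plans) between two measures. -/
def couplings {E : Type*} [MeasurableSpace E] (μ ν : Measure E) : Set (Measure (E × E)) :=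
  {π | π.map Prod.fst = μ ∧ π.map Prod.snd = ν}

/-- The Wasserstein distance of order `p`:
`W_p(μ,ν) = (inf over couplings π of ∫ dist(x,y)^p dπ)^(1/p)`. -/
noncomputable def wassersteinDist {E : Type*} [MeasurableSpace E] [PseudoMetricSpace E]
    (p : ℝ) (μ ν : Measure E) : ℝ :=
  (⨅ π ∈ couplings μ ν, ∫⁻ q : E × E, ENNReal.ofReal (dist q.1 q.2 ^ p) ∂π).toReal ^ (1 / p)

/-- A measure has a finite `p`-th moment. -/
def FiniteMomentP {E : Type*} [MeasurableSpace E] [NormedAddCommGroup E] (p : ℝ)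
    (μ : Measure E) : Prop :=
  ∫⁻ x, ENNReal.ofReal (‖x‖ ^ p) ∂μ < ⊤

/-- Stride-2 convolution of a `c' × (2m) × (2m)` tensor with a `c' × 2 × 2` kernel (one output
channel): `Y i j = ∑ h, ∑ i', ∑ j', X h (2i+i') (2j+j') * K h i' j'`. -/
def convStride2 {c' : ℕ} (m : ℕ) (X : Fin c' → Fin (2 * m) → Fin (2 * m) → ℝ)
    (K : Fin c' → Fin 2 → Fin 2 → ℝ) (i j : Fin m) : ℝ :=
  ∑ h : Fin c', ∑ i' : Fin 2, ∑ j' : Fin 2,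
    X h ⟨2 * i.1 + i'.1, by have h1 := i.isLt; have h2 := i'.isLt; omega⟩
        ⟨2 * j.1 + j'.1, by have h1 := j.isLt; have h2 := j'.isLt; omega⟩ * K h i' j'

/-- Iterated stride-2 convolutions with single-channel `1 × 2 × 2` kernels, going from
spatial size `2^k * a` down to size `a`; `Ks 0` is applied first. -/
def midConv (a : ℕ) : (k : ℕ) → (Fin k → Fin 1 → Fin 2 → Fin 2 → ℝ) →
    (Fin (2 ^ k * a) → Fin (2 ^ k * a) → ℝ) → Fin a → Fin a → ℝ
  | 0, _, X, i, j => X (Fin.cast (by ring) i) (Fin.cast (by ring) j)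
  | k + 1, Ks, X, i, j =>
      midConv a k (fun t => Ks t.succ)
        (convStride2 (2 ^ k * a)
          (fun _ r s => X (Fin.cast (by ring) r) (Fin.cast (by ring) s))
          (Ks 0)) i j

/-- The space of `c × d × d` images, with the Euclidean (ℓ2) norm. -/
abbrev TensorSpace (c d : ℕ) := EuclideanSpace ℝ (Fin c × Fin d × Fin d)

/-- The convolution-stride slicer `CS-s(·|K^(1),…,K^(N))` with `N = M + 2` kernels, on images of
size `c × d × d` where `d = 2^(M+1) * a`: a stride-2 convolution with the `c × 2 × 2` kernel `K1`,
then `M` stride-2 convolutions with the `1 × 2 × 2` kernels `Ks`, then the inner product with the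
`1 × a × a` kernel `KN`. -/
def CSs (c a M : ℕ) (K1 : Fin c → Fin 2 → Fin 2 → ℝ)
    (Ks : Fin M → Fin 1 → Fin 2 → Fin 2 → ℝ) (KN : Fin 1 → Fin a → Fin a → ℝ)
    (X : TensorSpace c (2 ^ (M + 1) * a)) : ℝ :=
  ∑ i : Fin a, ∑ j : Fin a,
    midConv a M Ks
      (convStride2 (2 ^ M * a)
        (fun h r s => X (h, Fin.cast (by ring) r, Fin.cast (by ring) s)) K1) i j * KN 0 i j

/-- The uniform probability distribution on the unit sphere of `EuclideanSpace ℝ ι`. -/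
noncomputable def sphereUniform (ι : Type*) [Fintype ι] :
    Measure (Metric.sphere (0 : EuclideanSpace ℝ ι) 1) :=
  ((volume : Measure (EuclideanSpace ℝ ι)).toSphere Set.univ)⁻¹ •
    (volume : Measure (EuclideanSpace ℝ ι)).toSphere

/-- Sample space for the random kernels of the convolution-stride slicer: one kernel in the unit
sphere of `ℝ^{c×2×2}`, `M` kernels in the unit sphere of `ℝ^{1×2×2}`, and one kernel in the unit
sphere of `ℝ^{1×a×a}`. -/
abbrev KernelOmega (c a M : ℕ) :=
  Metric.sphere (0 : EuclideanSpace ℝ (Fin c × Fin 2 × Fin 2)) 1 ×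
    (Fin M → Metric.sphere (0 : EuclideanSpace ℝ (Fin 1 × Fin 2 × Fin 2)) 1) ×
    Metric.sphere (0 : EuclideanSpace ℝ (Fin 1 × Fin a × Fin a)) 1

/-- The joint law of the random kernels: independent, each uniformly distributed on the unit
sphere of its kernel space. -/
noncomputable def kernelMeasure (c a M : ℕ) : Measure (KernelOmega c a M) :=
  (sphereUniform (Fin c × Fin 2 × Fin 2)).prod
    ((Measure.pi fun _ : Fin M => sphereUniform (Fin 1 × Fin 2 × Fin 2)).prod
      (sphereUniform (Fin 1 × Fin a × Fin a)))

/-- View a point of `EuclideanSpace ℝ (α × β × γ)` as a curried kernel. -/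
def curry3 {α β γ : Type*} (x : EuclideanSpace ℝ (α × β × γ)) : α → β → γ → ℝ :=
  fun h i j => x (h, i, j)

/-- The convolution-stride slicer associated with a sample of the random kernels. -/
noncomputable def slicerOf (c a M : ℕ) (ω : KernelOmega c a M) :
    TensorSpace c (2 ^ (M + 1) * a) → ℝ :=
  CSs c a M (curry3 (ω.1 : EuclideanSpace ℝ (Fin c × Fin 2 × Fin 2)))
    (fun t => curry3 (ω.2.1 t : EuclideanSpace ℝ (Fin 1 × Fin 2 × Fin 2)))
    (curry3 (ω.2.2 : EuclideanSpace ℝ (Fin 1 × Fin a × Fin a)))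

/-- The convolution-stride sliced Wasserstein distance of order `p`:
`CSW-s_p(μ,ν) = (E[W_p^p(CS-s(·|K)♯μ, CS-s(·|K)♯ν)])^(1/p)`, the expectation being over the
random kernels. -/
noncomputable def CSWs (c a M : ℕ) (p : ℝ)
    (μ ν : Measure (TensorSpace c (2 ^ (M + 1) * a))) : ℝ :=
  (∫ ω, wassersteinDist p (μ.map (slicerOf c a M ω)) (ν.map (slicerOf c a M ω)) ^ p
    ∂(kernelMeasure c a M)) ^ (1 / p)

/-- The max-sliced Wasserstein distance of order `p`:
`Max-SW_p(μ,ν) = sup_{‖θ‖ ≤ 1} W_p(θ♯μ, θ♯ν)`, where `θ♯μ` is the pushforward of `μ` under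
`x ↦ ⟨θ, x⟩`. -/
noncomputable def maxSW {ι : Type*} [Fintype ι] (p : ℝ)
    (μ ν : Measure (EuclideanSpace ℝ ι)) : ℝ :=
  sSup {r : ℝ | ∃ θ : EuclideanSpace ℝ ι, ‖θ‖ ≤ 1 ∧
    r = wassersteinDist p (μ.map fun x => (inner ℝ θ x : ℝ))
          (ν.map fun x => (inner ℝ θ x : ℝ))}

/-! ### Auxiliary lemmas -/

section Aux

lemma wassersteinDist_nonneg' {E : Type*} [MeasurableSpace E] [PseudoMetricSpace E]
    (p : ℝ) (μ ν : Measure E) : 0 ≤ wassersteinDist p μ ν :=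
  Real.rpow_nonneg ENNReal.toReal_nonneg _

/-! #### Index juggling -/

def pairEquiv (m : ℕ) : Fin m × Fin 2 ≃ Fin (2 * m) where
  toFun p := ⟨2 * p.1.1 + p.2.1, by have := p.1.isLt; have := p.2.isLt; omega⟩
  invFun r := (⟨r.1 / 2, by have := r.isLt; omega⟩, ⟨r.1 % 2, by omega⟩)
  left_inv p := by
    ext
    · simp; omega
    · simp; omega
  right_inv r := by ext; simp; omega

def bigEquiv (c' m : ℕ) :
    (Fin m × Fin m) × Fin c' × Fin 2 × Fin 2 ≃ Fin c' × Fin (2 * m) × Fin (2 * m) where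
  toFun q := (q.2.1, pairEquiv m (q.1.1, q.2.2.1), pairEquiv m (q.1.2, q.2.2.2))
  invFun w := ((((pairEquiv m).symm w.2.1).1, ((pairEquiv m).symm w.2.2).1), w.1,
    ((pairEquiv m).symm w.2.1).2, ((pairEquiv m).symm w.2.2).2)
  left_inv := by rintro ⟨⟨i, j⟩, h, i', j'⟩; simp
  right_inv := by rintro ⟨h, r, s⟩; simp

lemma sum_cast {n m : ℕ} (h : n = m) (f : Fin m → ℝ) :
    ∑ i : Fin n, f (Fin.cast h i) = ∑ j, f j :=
  Fintype.sum_equiv (finCongr h) _ _ fun _ => rfl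

lemma sum_cast2 {n m : ℕ} (h : n = m) (f : Fin m → Fin m → ℝ) :
    ∑ i : Fin n, ∑ j : Fin n, f (Fin.cast h i) (Fin.cast h j) = ∑ r, ∑ s, f r s := by
  rw [sum_cast h (f := fun r => ∑ j : Fin n, f r (Fin.cast h j))]
  exact Finset.sum_congr rfl fun r _ => sum_cast h _

/-! #### Norm bounds for the slicer -/

lemma convStride2_sq_le {c' : ℕ} (m : ℕ) (X : Fin c' → Fin (2 * m) → Fin (2 * m) → ℝ)
    (K : Fin c' → Fin 2 → Fin 2 → ℝ) (hK : ∑ h, ∑ i', ∑ j', K h i' j' ^ 2 = 1) :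
    ∑ i : Fin m, ∑ j : Fin m, convStride2 m X K i j ^ 2 ≤ ∑ h, ∑ r, ∑ s, X h r s ^ 2 := by
  have step1 : ∀ i j : Fin m, convStride2 m X K i j ^ 2 ≤
      ∑ h : Fin c', ∑ i' : Fin 2, ∑ j' : Fin 2,
        X h ⟨2 * i.1 + i'.1, by have h1 := i.isLt; have h2 := i'.isLt; omega⟩
            ⟨2 * j.1 + j'.1, by have h1 := j.isLt; have h2 := j'.isLt; omega⟩ ^ 2 := by
    intro i j
    have := Finset.sum_mul_sq_le_sq_mul_sq (Finset.univ : Finset (Fin c' × Fin 2 × Fin 2))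
      (fun q => X q.1 ⟨2 * i.1 + q.2.1.1, by have h1 := i.isLt; have h2 := q.2.1.isLt; omega⟩
          ⟨2 * j.1 + q.2.2.1, by have h1 := j.isLt; have h2 := q.2.2.isLt; omega⟩)
      (fun q => K q.1 q.2.1 q.2.2)
    simp only [Fintype.sum_prod_type] at this
    rw [hK, mul_one] at this
    rw [convStride2]
    exact this
  calc ∑ i : Fin m, ∑ j : Fin m, convStride2 m X K i j ^ 2
      ≤ ∑ i : Fin m, ∑ j : Fin m, ∑ h : Fin c', ∑ i' : Fin 2, ∑ j' : Fin 2,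
        X h ⟨2 * i.1 + i'.1, by have h1 := i.isLt; have h2 := i'.isLt; omega⟩
            ⟨2 * j.1 + j'.1, by have h1 := j.isLt; have h2 := j'.isLt; omega⟩ ^ 2 :=
        Finset.sum_le_sum fun i _ => Finset.sum_le_sum fun j _ => step1 i j
    _ = ∑ q : (Fin m × Fin m) × Fin c' × Fin 2 × Fin 2,
        (fun w : Fin c' × Fin (2 * m) × Fin (2 * m) => X w.1 w.2.1 w.2.2 ^ 2) (bigEquiv c' m q) := by
        simp only [Fintype.sum_prod_type]; rfl
    _ = ∑ w : Fin c' × Fin (2 * m) × Fin (2 * m), X w.1 w.2.1 w.2.2 ^ 2 :=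
        Equiv.sum_comp (bigEquiv c' m) fun w => X w.1 w.2.1 w.2.2 ^ 2
    _ = ∑ h, ∑ r, ∑ s, X h r s ^ 2 := by simp only [Fintype.sum_prod_type]

lemma midConv_sq_le (a : ℕ) (k : ℕ) (Ks : Fin k → Fin 1 → Fin 2 → Fin 2 → ℝ)
    (hKs : ∀ t, ∑ h, ∑ i', ∑ j', Ks t h i' j' ^ 2 = 1)
    (X : Fin (2 ^ k * a) → Fin (2 ^ k * a) → ℝ) :
    ∑ i : Fin a, ∑ j : Fin a, midConv a k Ks X i j ^ 2 ≤ ∑ r, ∑ s, X r s ^ 2 := by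
  induction k with
  | zero => exact le_of_eq (sum_cast2 (by ring) fun r s => X r s ^ 2)
  | succ k ih =>
      show ∑ i : Fin a, ∑ j : Fin a, midConv a k (fun t => Ks t.succ)
        (convStride2 (2 ^ k * a)
          (fun _ r s => X (Fin.cast (by ring) r) (Fin.cast (by ring) s)) (Ks 0)) i j ^ 2 ≤ _
      refine le_trans (ih (fun t => Ks t.succ) (fun t => hKs t.succ) _) ?_
      refine le_trans (convStride2_sq_le (2 ^ k * a) _ (Ks 0) (hKs 0)) ?_
      rw [Finset.sum_const, Finset.card_univ, Fintype.card_fin, one_smul]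
      exact le_of_eq (sum_cast2 (by ring) fun r s => X r s ^ 2)

lemma CSs_abs_le (c a M : ℕ) (K1 : Fin c → Fin 2 → Fin 2 → ℝ)
    (Ks : Fin M → Fin 1 → Fin 2 → Fin 2 → ℝ) (KN : Fin 1 → Fin a → Fin a → ℝ)
    (hK1 : ∑ h, ∑ i', ∑ j', K1 h i' j' ^ 2 = 1)
    (hKs : ∀ t, ∑ h, ∑ i', ∑ j', Ks t h i' j' ^ 2 = 1)
    (hKN : ∑ h, ∑ i, ∑ j, KN h i j ^ 2 = 1)
    (X : TensorSpace c (2 ^ (M + 1) * a)) :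
    |CSs c a M K1 Ks KN X| ≤ ‖X‖ := by
  have hKN' : ∑ i, ∑ j, KN 0 i j ^ 2 = 1 := by
    rw [Fin.sum_univ_one] at hKN; exact hKN
  set B := midConv a M Ks
    (convStride2 (2 ^ M * a)
      (fun h r s => X (h, Fin.cast (by ring) r, Fin.cast (by ring) s)) K1) with hB
  have h1 : CSs c a M K1 Ks KN X ^ 2 ≤ ∑ i : Fin a, ∑ j : Fin a, B i j ^ 2 := by
    have := Finset.sum_mul_sq_le_sq_mul_sq (Finset.univ : Finset (Fin a × Fin a))
      (fun q => B q.1 q.2) (fun q => KN 0 q.1 q.2)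
    simp only [Fintype.sum_prod_type] at this
    rw [hKN', mul_one] at this
    exact this
  have h2 : ∑ i : Fin a, ∑ j : Fin a, B i j ^ 2
      ≤ ∑ h, ∑ r, ∑ s, X (h, Fin.cast (by ring : 2 * (2 ^ M * a) = 2 ^ (M + 1) * a) r,
          Fin.cast (by ring : 2 * (2 ^ M * a) = 2 ^ (M + 1) * a) s) ^ 2 :=
    le_trans (midConv_sq_le a M Ks hKs _) (convStride2_sq_le (2 ^ M * a) _ K1 hK1)
  have h3 : ∑ h, ∑ r, ∑ s, X (h, Fin.cast (by ring : 2 * (2 ^ M * a) = 2 ^ (M + 1) * a) r,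
          Fin.cast (by ring : 2 * (2 ^ M * a) = 2 ^ (M + 1) * a) s) ^ 2 = ‖X‖ ^ 2 := by
    have e1 : ∀ h : Fin c, ∑ r, ∑ s,
        X (h, Fin.cast (by ring : 2 * (2 ^ M * a) = 2 ^ (M + 1) * a) r,
          Fin.cast (by ring : 2 * (2 ^ M * a) = 2 ^ (M + 1) * a) s) ^ 2
        = ∑ r, ∑ s, X (h, r, s) ^ 2 := fun h =>
      sum_cast2 (by ring) fun r s => X (h, r, s) ^ 2
    rw [Finset.sum_congr rfl fun h _ => e1 h, EuclideanSpace.norm_eq,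
      Real.sq_sqrt (Finset.sum_nonneg fun _ _ => sq_nonneg _)]
    simp [Fintype.sum_prod_type, sq_abs]
  have h4 : CSs c a M K1 Ks KN X ^ 2 ≤ ‖X‖ ^ 2 := by
    rw [← h3]; exact le_trans h1 h2
  calc |CSs c a M K1 Ks KN X| = Real.sqrt (CSs c a M K1 Ks KN X ^ 2) :=
        (Real.sqrt_sq_eq_abs _).symm
    _ ≤ Real.sqrt (‖X‖ ^ 2) := Real.sqrt_le_sqrt h4
    _ = ‖X‖ := Real.sqrt_sq (norm_nonneg _)

/-! #### Linearity of the slicer -/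

lemma convStride2_add {c' : ℕ} (m : ℕ) (X Y : Fin c' → Fin (2 * m) → Fin (2 * m) → ℝ)
    (K : Fin c' → Fin 2 → Fin 2 → ℝ) (i j : Fin m) :
    convStride2 m (fun h r s => X h r s + Y h r s) K i j
      = convStride2 m X K i j + convStride2 m Y K i j := by
  simp [convStride2, add_mul, Finset.sum_add_distrib]

lemma convStride2_smul {c' : ℕ} (m : ℕ) (t : ℝ) (X : Fin c' → Fin (2 * m) → Fin (2 * m) → ℝ)
    (K : Fin c' → Fin 2 → Fin 2 → ℝ) (i j : Fin m) :
    convStride2 m (fun h r s => t * X h r s) K i j = t * convStride2 m X K i j := by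
  simp only [convStride2, Finset.mul_sum]
  exact Finset.sum_congr rfl fun h _ => Finset.sum_congr rfl fun i1 _ =>
    Finset.sum_congr rfl fun j1 _ => by ring

lemma midConv_add (a : ℕ) (k : ℕ) (Ks : Fin k → Fin 1 → Fin 2 → Fin 2 → ℝ)
    (X Y : Fin (2 ^ k * a) → Fin (2 ^ k * a) → ℝ) (i j : Fin a) :
    midConv a k Ks (fun r s => X r s + Y r s) i j
      = midConv a k Ks X i j + midConv a k Ks Y i j := by
  induction k generalizing i j with
  | zero => rfl
  | succ k ih =>
      show midConv a k _ (convStride2 (2 ^ k * a)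
        (fun _ r s => X (Fin.cast (by ring) r) (Fin.cast (by ring) s)
          + Y (Fin.cast (by ring) r) (Fin.cast (by ring) s)) (Ks 0)) i j = _
      have : (convStride2 (2 ^ k * a)
          (fun _ r s => X (Fin.cast (by ring) r) (Fin.cast (by ring) s)
            + Y (Fin.cast (by ring) r) (Fin.cast (by ring) s)) (Ks 0))
          = fun i j => (convStride2 (2 ^ k * a)
          (fun _ r s => X (Fin.cast (by ring) r) (Fin.cast (by ring) s)) (Ks 0)) i j
          + (convStride2 (2 ^ k * a)
          (fun _ r s => Y (Fin.cast (by ring) r) (Fin.cast (by ring) s)) (Ks 0)) i j :=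
        funext fun i => funext fun j => convStride2_add _ _ _ _ i j
      rw [this, ih]
      rfl

lemma midConv_smul (a : ℕ) (k : ℕ) (t : ℝ) (Ks : Fin k → Fin 1 → Fin 2 → Fin 2 → ℝ)
    (X : Fin (2 ^ k * a) → Fin (2 ^ k * a) → ℝ) (i j : Fin a) :
    midConv a k Ks (fun r s => t * X r s) i j = t * midConv a k Ks X i j := by
  induction k generalizing i j with
  | zero => rfl
  | succ k ih =>
      show midConv a k _ (convStride2 (2 ^ k * a)
        (fun _ r s => t * X (Fin.cast (by ring) r) (Fin.cast (by ring) s)) (Ks 0)) i j = _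
      have : (convStride2 (2 ^ k * a)
          (fun _ r s => t * X (Fin.cast (by ring) r) (Fin.cast (by ring) s)) (Ks 0))
          = fun i j => t * (convStride2 (2 ^ k * a)
          (fun _ r s => X (Fin.cast (by ring) r) (Fin.cast (by ring) s)) (Ks 0)) i j :=
        funext fun i => funext fun j => convStride2_smul _ _ _ _ i j
      rw [this, ih]
      rfl

lemma CSs_add (c a M : ℕ) (K1 : Fin c → Fin 2 → Fin 2 → ℝ)
    (Ks : Fin M → Fin 1 → Fin 2 → Fin 2 → ℝ) (KN : Fin 1 → Fin a → Fin a → ℝ)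
    (X Y : TensorSpace c (2 ^ (M + 1) * a)) :
    CSs c a M K1 Ks KN (X + Y) = CSs c a M K1 Ks KN X + CSs c a M K1 Ks KN Y := by
  unfold CSs
  simp only [PiLp.add_apply]
  rw [← Finset.sum_add_distrib]
  refine Finset.sum_congr rfl fun i _ => ?_
  rw [← Finset.sum_add_distrib]
  refine Finset.sum_congr rfl fun j _ => ?_
  rw [← add_mul]
  congr 1
  have e : (convStride2 (2 ^ M * a)
      (fun h r s => X (h, Fin.cast (by ring) r, Fin.cast (by ring) s)
        + Y (h, Fin.cast (by ring) r, Fin.cast (by ring) s)) K1)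
      = fun i j => (convStride2 (2 ^ M * a)
      (fun h r s => X (h, Fin.cast (by ring) r, Fin.cast (by ring) s)) K1) i j
      + (convStride2 (2 ^ M * a)
      (fun h r s => Y (h, Fin.cast (by ring) r, Fin.cast (by ring) s)) K1) i j :=
    funext fun i => funext fun j => convStride2_add _ _ _ _ i j
  rw [e, midConv_add]

lemma CSs_smul (c a M : ℕ) (K1 : Fin c → Fin 2 → Fin 2 → ℝ)
    (Ks : Fin M → Fin 1 → Fin 2 → Fin 2 → ℝ) (KN : Fin 1 → Fin a → Fin a → ℝ)
    (t : ℝ) (X : TensorSpace c (2 ^ (M + 1) * a)) :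
    CSs c a M K1 Ks KN (t • X) = t * CSs c a M K1 Ks KN X := by
  unfold CSs
  simp only [PiLp.smul_apply, smul_eq_mul]
  rw [Finset.mul_sum]
  refine Finset.sum_congr rfl fun i _ => ?_
  rw [Finset.mul_sum]
  refine Finset.sum_congr rfl fun j _ => ?_
  have e : (convStride2 (2 ^ M * a)
      (fun h r s => t * X (h, Fin.cast (by ring) r, Fin.cast (by ring) s)) K1)
      = fun i j => t * (convStride2 (2 ^ M * a)
      (fun h r s => X (h, Fin.cast (by ring) r, Fin.cast (by ring) s)) K1) i j :=
    funext fun i => funext fun j => convStride2_smul _ _ _ _ i j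
  rw [e, midConv_smul]
  ring

/-- The slicer as a linear map. -/
def CSsLM (c a M : ℕ) (K1 : Fin c → Fin 2 → Fin 2 → ℝ)
    (Ks : Fin M → Fin 1 → Fin 2 → Fin 2 → ℝ) (KN : Fin 1 → Fin a → Fin a → ℝ) :
    TensorSpace c (2 ^ (M + 1) * a) →ₗ[ℝ] ℝ where
  toFun := CSs c a M K1 Ks KN
  map_add' := CSs_add c a M K1 Ks KN
  map_smul' := CSs_smul c a M K1 Ks KN

/-- The vector representing the slicer. -/
def thetaCS (c a M : ℕ) (K1 : Fin c → Fin 2 → Fin 2 → ℝ)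
    (Ks : Fin M → Fin 1 → Fin 2 → Fin 2 → ℝ) (KN : Fin 1 → Fin a → Fin a → ℝ) :
    TensorSpace c (2 ^ (M + 1) * a) :=
  WithLp.toLp 2 (fun w => CSs c a M K1 Ks KN (EuclideanSpace.single w 1))

lemma CSs_eq_inner (c a M : ℕ) (K1 : Fin c → Fin 2 → Fin 2 → ℝ)
    (Ks : Fin M → Fin 1 → Fin 2 → Fin 2 → ℝ) (KN : Fin 1 → Fin a → Fin a → ℝ)
    (X : TensorSpace c (2 ^ (M + 1) * a)) :
    CSs c a M K1 Ks KN X = (inner ℝ (thetaCS c a M K1 Ks KN) X : ℝ) := by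
  have hX : X = ∑ w, X w • EuclideanSpace.single w (1 : ℝ) := by
    have := (EuclideanSpace.basisFun (Fin c × Fin (2 ^ (M + 1) * a) × Fin (2 ^ (M + 1) * a)) ℝ).sum_repr X
    simp only [EuclideanSpace.basisFun_apply, EuclideanSpace.basisFun_repr] at this
    exact this.symm
  calc CSs c a M K1 Ks KN X = CSsLM c a M K1 Ks KN X := rfl
    _ = CSsLM c a M K1 Ks KN (∑ w, X w • EuclideanSpace.single w (1 : ℝ)) := by rw [← hX]
    _ = ∑ w, X w * CSs c a M K1 Ks KN (EuclideanSpace.single w (1 : ℝ)) := by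
        rw [map_sum]
        exact Finset.sum_congr rfl fun w _ => by
          rw [LinearMap.map_smul, smul_eq_mul]; rfl
    _ = (inner ℝ (thetaCS c a M K1 Ks KN) X : ℝ) := by
        rw [PiLp.inner_apply]
        exact Finset.sum_congr rfl fun w _ => by
          simp [thetaCS, mul_comm]

lemma norm_thetaCS_le (c a M : ℕ) (K1 : Fin c → Fin 2 → Fin 2 → ℝ)
    (Ks : Fin M → Fin 1 → Fin 2 → Fin 2 → ℝ) (KN : Fin 1 → Fin a → Fin a → ℝ)
    (hK1 : ∑ h, ∑ i', ∑ j', K1 h i' j' ^ 2 = 1)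
    (hKs : ∀ t, ∑ h, ∑ i', ∑ j', Ks t h i' j' ^ 2 = 1)
    (hKN : ∑ h, ∑ i, ∑ j, KN h i j ^ 2 = 1) :
    ‖thetaCS c a M K1 Ks KN‖ ≤ 1 := by
  set θ := thetaCS c a M K1 Ks KN with hθ
  have h1 : |CSs c a M K1 Ks KN θ| ≤ ‖θ‖ := CSs_abs_le c a M K1 Ks KN hK1 hKs hKN θ
  have h2 : CSs c a M K1 Ks KN θ = (inner ℝ θ θ : ℝ) := CSs_eq_inner c a M K1 Ks KN θ
  have h3 : (inner ℝ θ θ : ℝ) = ‖θ‖ ^ 2 := real_inner_self_eq_norm_sq θ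
  have h4 : ‖θ‖ ^ 2 ≤ ‖θ‖ := by
    calc ‖θ‖ ^ 2 = CSs c a M K1 Ks KN θ := by rw [h2, h3]
      _ ≤ |CSs c a M K1 Ks KN θ| := le_abs_self _
      _ ≤ ‖θ‖ := h1
  nlinarith [norm_nonneg θ]

lemma sum_sq_curry3 {α β γ : Type*} [Fintype α] [Fintype β] [Fintype γ]
    (x : EuclideanSpace ℝ (α × β × γ)) :
    ∑ h, ∑ i, ∑ j, curry3 x h i j ^ 2 = ‖x‖ ^ 2 := by
  rw [EuclideanSpace.norm_eq, Real.sq_sqrt (Finset.sum_nonneg fun _ _ => sq_nonneg _)]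
  simp [Fintype.sum_prod_type, curry3, sq_abs]

/-! #### Measure-theoretic lemmas -/

instance sphereUniform_prob (ι : Type*) [Fintype ι] [Nonempty ι] :
    IsProbabilityMeasure (sphereUniform ι) := by
  constructor
  rw [sphereUniform, Measure.smul_apply, smul_eq_mul]
  refine ENNReal.inv_mul_cancel ?_ ?_
  · rw [Measure.toSphere_apply_univ]
    refine mul_ne_zero ?_ ?_
    · simp [finrank_euclideanSpace]
    · exact (Metric.measure_ball_pos volume 0 one_pos).ne'
  · exact measure_ne_top _ _

section WassSec
variable {ι : Type*} [Fintype ι]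

lemma dist_pow_le {p : ℝ} (hp0 : 0 ≤ p) (x y : EuclideanSpace ℝ ι) :
    dist x y ^ p ≤ 2 ^ p * (‖x‖ ^ p + ‖y‖ ^ p) := by
  have h1 : dist x y ≤ ‖x‖ + ‖y‖ := dist_le_norm_add_norm x y
  have h2 : dist x y ^ p ≤ (‖x‖ + ‖y‖) ^ p := Real.rpow_le_rpow dist_nonneg h1 hp0
  have h3 : ‖x‖ + ‖y‖ ≤ 2 * max ‖x‖ ‖y‖ := by
    rcases le_total ‖x‖ ‖y‖ with h | h
    · rw [max_eq_right h]; linarith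
    · rw [max_eq_left h]; linarith
  have h4 : (‖x‖ + ‖y‖) ^ p ≤ (2 * max ‖x‖ ‖y‖) ^ p :=
    Real.rpow_le_rpow (by positivity) h3 hp0
  have h5 : (2 * max ‖x‖ ‖y‖) ^ p = 2 ^ p * max ‖x‖ ‖y‖ ^ p :=
    Real.mul_rpow (by norm_num) (le_max_of_le_left (norm_nonneg _))
  have h6 : max ‖x‖ ‖y‖ ^ p ≤ ‖x‖ ^ p + ‖y‖ ^ p := by
    rcases le_total ‖x‖ ‖y‖ with h | h
    · rw [max_eq_right h]
      exact le_add_of_nonneg_left (Real.rpow_nonneg (norm_nonneg _) _)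
    · rw [max_eq_left h]
      exact le_add_of_nonneg_right (Real.rpow_nonneg (norm_nonneg _) _)
  calc dist x y ^ p ≤ (2 * max ‖x‖ ‖y‖) ^ p := le_trans h2 h4
  _ = 2 ^ p * max ‖x‖ ‖y‖ ^ p := h5
  _ ≤ 2 ^ p * (‖x‖ ^ p + ‖y‖ ^ p) := mul_le_mul_of_nonneg_left h6 (by positivity)

lemma coupling_cost_ne_top {p : ℝ} (hp0 : 0 ≤ p) (μ ν : Measure (EuclideanSpace ℝ ι))
    [IsProbabilityMeasure μ] [IsProbabilityMeasure ν]
    (hμ : FiniteMomentP p μ) (hν : FiniteMomentP p ν) :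
    (⨅ π ∈ couplings μ ν,
      ∫⁻ q : EuclideanSpace ℝ ι × EuclideanSpace ℝ ι,
        ENNReal.ofReal (dist q.1 q.2 ^ p) ∂π) ≠ ⊤ := by
  have hprod : μ.prod ν ∈ couplings μ ν := by
    constructor
    · rw [Measure.map_fst_prod]; simp
    · rw [Measure.map_snd_prod]; simp
  refine ne_top_of_le_ne_top (LT.lt.ne ?_) (iInf₂_le (μ.prod ν) hprod)
  have hb : ∀ q : EuclideanSpace ℝ ι × EuclideanSpace ℝ ι,
      ENNReal.ofReal (dist q.1 q.2 ^ p) ≤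
      ENNReal.ofReal (2 ^ p) * (ENNReal.ofReal (‖q.1‖ ^ p) + ENNReal.ofReal (‖q.2‖ ^ p)) := by
    intro q
    calc ENNReal.ofReal (dist q.1 q.2 ^ p)
        ≤ ENNReal.ofReal (2 ^ p * (‖q.1‖ ^ p + ‖q.2‖ ^ p)) :=
          ENNReal.ofReal_le_ofReal (dist_pow_le hp0 q.1 q.2)
      _ = ENNReal.ofReal (2 ^ p) * (ENNReal.ofReal (‖q.1‖ ^ p) + ENNReal.ofReal (‖q.2‖ ^ p)) := by
          rw [ENNReal.ofReal_mul (by positivity),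
            ENNReal.ofReal_add (by positivity) (by positivity)]
  have hfm : Measurable fun x : EuclideanSpace ℝ ι => ENNReal.ofReal (‖x‖ ^ p) :=
    (ENNReal.continuous_ofReal.comp
      ((Real.continuous_rpow_const hp0).comp continuous_norm)).measurable
  calc ∫⁻ q : EuclideanSpace ℝ ι × EuclideanSpace ℝ ι,
        ENNReal.ofReal (dist q.1 q.2 ^ p) ∂(μ.prod ν)
      ≤ ∫⁻ q : EuclideanSpace ℝ ι × EuclideanSpace ℝ ι, ENNReal.ofReal (2 ^ p) *
        (ENNReal.ofReal (‖q.1‖ ^ p) + ENNReal.ofReal (‖q.2‖ ^ p)) ∂(μ.prod ν) :=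
        lintegral_mono hb
    _ = ENNReal.ofReal (2 ^ p) * (∫⁻ q : EuclideanSpace ℝ ι × EuclideanSpace ℝ ι,
        (ENNReal.ofReal (‖q.1‖ ^ p) + ENNReal.ofReal (‖q.2‖ ^ p)) ∂(μ.prod ν)) :=
        lintegral_const_mul _ ((hfm.comp measurable_fst).add (hfm.comp measurable_snd))
    _ = ENNReal.ofReal (2 ^ p) * ((∫⁻ q : EuclideanSpace ℝ ι × EuclideanSpace ℝ ι,
        ENNReal.ofReal (‖q.1‖ ^ p) ∂(μ.prod ν))
        + ∫⁻ q : EuclideanSpace ℝ ι × EuclideanSpace ℝ ι,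
        ENNReal.ofReal (‖q.2‖ ^ p) ∂(μ.prod ν)) := by
        rw [lintegral_add_left (μ := μ.prod ν)
          (f := fun q : _ × _ => ENNReal.ofReal (‖q.1‖ ^ p)) (hfm.comp measurable_fst)
          (fun q => ENNReal.ofReal (‖q.2‖ ^ p))]
    _ < ⊤ := by
        have e1 : (∫⁻ q : EuclideanSpace ℝ ι × EuclideanSpace ℝ ι,
            ENNReal.ofReal (‖q.1‖ ^ p) ∂(μ.prod ν))
            = ∫⁻ x, ENNReal.ofReal (‖x‖ ^ p) ∂μ := by
          rw [← lintegral_map hfm measurable_fst, Measure.map_fst_prod, measure_univ, one_smul]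
        have e2 : (∫⁻ q : EuclideanSpace ℝ ι × EuclideanSpace ℝ ι,
            ENNReal.ofReal (‖q.2‖ ^ p) ∂(μ.prod ν))
            = ∫⁻ x, ENNReal.ofReal (‖x‖ ^ p) ∂ν := by
          rw [← lintegral_map hfm measurable_snd, Measure.map_snd_prod, measure_univ, one_smul]
        rw [e1, e2]
        exact ENNReal.mul_lt_top ENNReal.ofReal_lt_top (ENNReal.add_lt_top.2 ⟨hμ, hν⟩)

lemma wass_map_le {p : ℝ} (hp : 1 ≤ p) (μ ν : Measure (EuclideanSpace ℝ ι))
    [IsProbabilityMeasure μ] [IsProbabilityMeasure ν]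
    (hμ : FiniteMomentP p μ) (hν : FiniteMomentP p ν)
    (θ : EuclideanSpace ℝ ι) (hθ : ‖θ‖ ≤ 1) :
    wassersteinDist p (μ.map fun x => (inner ℝ θ x : ℝ)) (ν.map fun x => (inner ℝ θ x : ℝ))
      ≤ wassersteinDist p μ ν := by
  have hp0 : (0 : ℝ) ≤ p := le_trans zero_le_one hp
  set f : EuclideanSpace ℝ ι → ℝ := fun x => (inner ℝ θ x : ℝ) with hfdef
  have hf : Measurable f := (continuous_const.inner continuous_id).measurable
  have hcost : Measurable fun q : ℝ × ℝ => ENNReal.ofReal (dist q.1 q.2 ^ p) :=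
    (ENNReal.continuous_ofReal.comp
      ((Real.continuous_rpow_const hp0).comp continuous_dist)).measurable
  have key : (⨅ π ∈ couplings (μ.map f) (ν.map f),
        ∫⁻ q : ℝ × ℝ, ENNReal.ofReal (dist q.1 q.2 ^ p) ∂π)
      ≤ ⨅ π ∈ couplings μ ν,
        ∫⁻ q : EuclideanSpace ℝ ι × EuclideanSpace ℝ ι,
          ENNReal.ofReal (dist q.1 q.2 ^ p) ∂π := by
    refine le_iInf₂ fun π hπ => ?_
    have hmem : π.map (Prod.map f f) ∈ couplings (μ.map f) (ν.map f) := by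
      constructor
      · rw [Measure.map_map measurable_fst (hf.prodMap hf)]
        have : (Prod.fst ∘ Prod.map f f : _ × _ → ℝ) = f ∘ Prod.fst := rfl
        rw [this, ← Measure.map_map hf measurable_fst, hπ.1]
      · rw [Measure.map_map measurable_snd (hf.prodMap hf)]
        have : (Prod.snd ∘ Prod.map f f : _ × _ → ℝ) = f ∘ Prod.snd := rfl
        rw [this, ← Measure.map_map hf measurable_snd, hπ.2]
    refine le_trans (iInf₂_le (π.map (Prod.map f f)) hmem) ?_
    rw [lintegral_map hcost (hf.prodMap hf)]
    refine lintegral_mono fun q => ENNReal.ofReal_le_ofReal ?_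
    refine Real.rpow_le_rpow dist_nonneg ?_ hp0
    calc dist (f q.1) (f q.2) = |inner ℝ θ q.1 - (inner ℝ θ q.2 : ℝ)| := Real.dist_eq _ _
      _ = |(inner ℝ θ (q.1 - q.2) : ℝ)| := by rw [inner_sub_right]
      _ ≤ ‖θ‖ * ‖q.1 - q.2‖ := abs_real_inner_le_norm θ _
      _ ≤ 1 * ‖q.1 - q.2‖ := mul_le_mul_of_nonneg_right hθ (norm_nonneg _)
      _ = dist q.1 q.2 := by rw [one_mul, dist_eq_norm]
  unfold wassersteinDist
  refine Real.rpow_le_rpow ENNReal.toReal_nonneg ?_ (by positivity)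
  exact ENNReal.toReal_mono (coupling_cost_ne_top hp0 μ ν hμ hν) key

end WassSec

end Aux


/-- Proposition 2 (for the convolution-stride slicer): for every `p ≥ 1` and all Borel
probability measures on `ℝ^{c×d×d}` (with `d = 2^(M+1)·a`) with finite `p`-th moments,
`CSW-s_p(μ,ν) ≤ Max-SW_p(μ,ν) ≤ W_p(μ,ν)`. -/
theorem CSWs_le_maxSW_le_wassersteinDist (c a M : ℕ) (hc : 1 ≤ c) (ha : 1 ≤ a)
    (p : ℝ) (hp : 1 ≤ p)
    (μ ν : Measure (TensorSpace c (2 ^ (M + 1) * a)))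
    [IsProbabilityMeasure μ] [IsProbabilityMeasure ν]
    (hμ : FiniteMomentP p μ) (hν : FiniteMomentP p ν) :
    CSWs c a M p μ ν ≤ maxSW p μ ν ∧ maxSW p μ ν ≤ wassersteinDist p μ ν    := by
  have hp0 : (0 : ℝ) ≤ p := le_trans zero_le_one hp
  have hppos : (0 : ℝ) < p := lt_of_lt_of_le one_pos hp
  haveI : Nonempty (Fin c) := ⟨⟨0, hc⟩⟩
  haveI : Nonempty (Fin a) := ⟨⟨0, ha⟩⟩
  haveI hs1 : IsProbabilityMeasure (sphereUniform (Fin c × Fin 2 × Fin 2)) :=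
    sphereUniform_prob _
  haveI hs2 : IsProbabilityMeasure (sphereUniform (Fin 1 × Fin 2 × Fin 2)) :=
    sphereUniform_prob _
  haveI hs3 : IsProbabilityMeasure (sphereUniform (Fin 1 × Fin a × Fin a)) :=
    sphereUniform_prob _
  haveI hpi : IsProbabilityMeasure
      (Measure.pi fun _ : Fin M => sphereUniform (Fin 1 × Fin 2 × Fin 2)) := by
    infer_instance
  haveI hkprob : IsProbabilityMeasure (kernelMeasure c a M) := by
    unfold kernelMeasure; infer_instance
  haveI hkfin : IsFiniteMeasure (kernelMeasure c a M) := ⟨by rw [hkprob.measure_univ]; exact ENNReal.one_lt_top⟩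
  have hub : ∀ r ∈ {r : ℝ | ∃ θ : EuclideanSpace ℝ
        (Fin c × Fin (2 ^ (M + 1) * a) × Fin (2 ^ (M + 1) * a)), ‖θ‖ ≤ 1 ∧
        r = wassersteinDist p (μ.map fun x => (inner ℝ θ x : ℝ))
          (ν.map fun x => (inner ℝ θ x : ℝ))}, r ≤ wassersteinDist p μ ν := by
    rintro r ⟨θ, hθ, rfl⟩
    exact wass_map_le hp μ ν hμ hν θ hθ
  have hbdd : BddAbove {r : ℝ | ∃ θ : EuclideanSpace ℝ
        (Fin c × Fin (2 ^ (M + 1) * a) × Fin (2 ^ (M + 1) * a)), ‖θ‖ ≤ 1 ∧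
        r = wassersteinDist p (μ.map fun x => (inner ℝ θ x : ℝ))
          (ν.map fun x => (inner ℝ θ x : ℝ))} := ⟨wassersteinDist p μ ν, hub⟩
  have part2 : maxSW p μ ν ≤ wassersteinDist p μ ν :=
    Real.sSup_le hub (wassersteinDist_nonneg' p μ ν)
  have hmax0 : 0 ≤ maxSW p μ ν := by
    refine le_trans (wassersteinDist_nonneg' p
      (μ.map fun x => (inner ℝ (0 : TensorSpace c (2 ^ (M + 1) * a)) x : ℝ))
      (ν.map fun x => (inner ℝ (0 : TensorSpace c (2 ^ (M + 1) * a)) x : ℝ)))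
      (le_csSup hbdd ⟨0, by simp, rfl⟩)
  have hpt : ∀ ω : KernelOmega c a M,
      wassersteinDist p (μ.map (slicerOf c a M ω)) (ν.map (slicerOf c a M ω))
        ≤ maxSW p μ ν := by
    intro ω
    set K1 := curry3 (ω.1 : EuclideanSpace ℝ (Fin c × Fin 2 × Fin 2)) with hK1def
    set Ks := fun t => curry3 (ω.2.1 t : EuclideanSpace ℝ (Fin 1 × Fin 2 × Fin 2)) with hKsdef
    set KN := curry3 (ω.2.2 : EuclideanSpace ℝ (Fin 1 × Fin a × Fin a)) with hKNdef
    have hK1 : ∑ h, ∑ i', ∑ j', K1 h i' j' ^ 2 = 1 := by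
      rw [hK1def, sum_sq_curry3, mem_sphere_zero_iff_norm.mp ω.1.2, one_pow]
    have hKs : ∀ t, ∑ h, ∑ i', ∑ j', Ks t h i' j' ^ 2 = 1 := fun t => by
      rw [hKsdef]
      rw [sum_sq_curry3, mem_sphere_zero_iff_norm.mp (ω.2.1 t).2, one_pow]
    have hKN : ∑ h, ∑ i, ∑ j, KN h i j ^ 2 = 1 := by
      rw [hKNdef, sum_sq_curry3, mem_sphere_zero_iff_norm.mp ω.2.2.2, one_pow]
    have hrep : slicerOf c a M ω = fun x => (inner ℝ (thetaCS c a M K1 Ks KN) x : ℝ) :=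
      funext fun x => CSs_eq_inner c a M K1 Ks KN x
    refine le_csSup hbdd
      ⟨thetaCS c a M K1 Ks KN, norm_thetaCS_le c a M K1 Ks KN hK1 hKs hKN, ?_⟩
    rw [hrep]
  have hint : (∫ ω, wassersteinDist p (μ.map (slicerOf c a M ω))
        (ν.map (slicerOf c a M ω)) ^ p ∂(kernelMeasure c a M)) ≤ maxSW p μ ν ^ p := by
    by_cases hI : Integrable (fun ω => wassersteinDist p (μ.map (slicerOf c a M ω))
        (ν.map (slicerOf c a M ω)) ^ p) (kernelMeasure c a M)
    · calc (∫ ω, wassersteinDist p (μ.map (slicerOf c a M ω))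
            (ν.map (slicerOf c a M ω)) ^ p ∂(kernelMeasure c a M))
          ≤ ∫ _ω, maxSW p μ ν ^ p ∂(kernelMeasure c a M) :=
            integral_mono hI (integrable_const _) fun ω =>
              Real.rpow_le_rpow (wassersteinDist_nonneg' _ _ _) (hpt ω) hp0
        _ = maxSW p μ ν ^ p := by simp
    · rw [integral_undef hI]
      exact Real.rpow_nonneg hmax0 p
  refine ⟨?_, part2⟩
  have h1 : (∫ ω, wassersteinDist p (μ.map (slicerOf c a M ω))
      (ν.map (slicerOf c a M ω)) ^ p ∂(kernelMeasure c a M)) ^ (1 / p)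
      ≤ (maxSW p μ ν ^ p) ^ (1 / p) :=
    Real.rpow_le_rpow (integral_nonneg fun ω =>
      Real.rpow_nonneg (wassersteinDist_nonneg' _ _ _) p) hint (by positivity)
  have h2 : (maxSW p μ ν ^ p) ^ (1 / p) = maxSW p μ ν := by
    rw [← Real.rpow_mul hmax0, mul_one_div_cancel hppos.ne', Real.rpow_one]
  calc CSWs c a M p μ ν = (∫ ω, wassersteinDist p (μ.map (slicerOf c a M ω))
      (ν.map (slicerOf c a M ω)) ^ p ∂(kernelMeasure c a M)) ^ (1 / p) := rfl
    _ ≤ (maxSW p μ ν ^ p) ^ (1 / p) := h1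
    _ = maxSW p μ ν := h2


end
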